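/- Every 2-local automorphism of Mₙ(ℝ) is an automorphism. -/

import Mathlib

open Matrix

private lemma trace_sbm {n : ℕ} (i j : Fin n) (c : ℝ) :
    (Matrix.single i j c).trace = if i = j then c else 0 := by
  by_cases h : i = j
  · subst h; simp [Matrix.trace, Matrix.diag, Matrix.single]
  · simp only [Matrix.trace, Matrix.diag, Matrix.single, of_apply, h, if_false]
    refine Finset.sum_eq_zero fun k _ => if_neg ?_
    rintro ⟨rfl, rfl⟩; exact h rfl

private lemma sum_diag_sbm {n : ℕ} : (∑ i : Fin n, Matrix.single i i (1:ℝ)) = 1 := by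
  ext a b
  rw [Matrix.sum_apply]
  simp only [Matrix.single, of_apply, one_apply]
  by_cases h : a = b
  · subst h; simp
  · rw [if_neg h]; refine Finset.sum_eq_zero fun k _ => if_neg ?_
    rintro ⟨rfl, rfl⟩; exact h rfl

private lemma trace_sbm_mul_sbm {n : ℕ} (i j k l : Fin n) :
    (Matrix.single i j (1:ℝ) * Matrix.single k l 1).trace
      = if j = k ∧ i = l then 1 else 0 := by
  by_cases hjk : j = k
  · subst hjk
    rw [single_mul_single_same, one_mul, trace_sbm]
    by_cases hil : i = l <;> simp [hil]
  · rw [single_mul_single_of_ne _ _ _ _ hjk, trace_zero, if_neg (by tauto)]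

private lemma trace_mul_sbm {n : ℕ} (A : Matrix (Fin n) (Fin n) ℝ) (l k : Fin n) :
    (A * Matrix.single l k (1:ℝ)).trace = A k l := by
  simp only [Matrix.trace, Matrix.diag, Matrix.mul_apply, Matrix.single, of_apply,
    mul_ite, mul_one, mul_zero]
  rw [Finset.sum_comm, Finset.sum_eq_single l]
  · rw [Finset.sum_eq_single k] <;> simp +contextual [eq_comm]
  · intro b _ hb
    refine Finset.sum_eq_zero fun x _ => if_neg ?_
    rintro ⟨rfl, rfl⟩; exact hb rfl
  · simp

private lemma trace_algEquiv {n : ℕ} (hn : 0 < n)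
    (ψ : Matrix (Fin n) (Fin n) ℝ ≃ₐ[ℝ] Matrix (Fin n) (Fin n) ℝ)
    (M : Matrix (Fin n) (Fin n) ℝ) : (ψ M).trace = M.trace := by
  set E : Fin n → Fin n → Matrix (Fin n) (Fin n) ℝ := fun i j => Matrix.single i j 1 with hE
  have z : Fin n := ⟨0, hn⟩
  have key : ∀ i j : Fin n, (ψ (E i j)).trace = if i = j then 1 else 0 := by
    have c0 : ∀ i : Fin n, (ψ (E i i)).trace = (ψ (E z z)).trace := by
      intro i
      have h1 : E i i = E i z * E z i := by simp [hE]
      have h2 : E z z = E z i * E i z := by simp [hE]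
      rw [h1, h2, _root_.map_mul, _root_.map_mul, trace_mul_comm]
    have csum : (∑ i : Fin n, (ψ (E i i)).trace) = n := by
      calc (∑ i : Fin n, (ψ (E i i)).trace) = (ψ (∑ i : Fin n, E i i)).trace := by
            rw [map_sum, trace_sum]
        _ = n := by rw [hE]; simp only [sum_diag_sbm, _root_.map_one, trace_one]; simp
    have c1 : (ψ (E z z)).trace = 1 := by
      have h6 : (∑ i : Fin n, (ψ (E i i)).trace) = (n : ℝ) * (ψ (E z z)).trace := by
        rw [Finset.sum_congr rfl (fun i _ => c0 i), Finset.sum_const,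
          Finset.card_univ, Fintype.card_fin, nsmul_eq_mul]
      exact mul_left_cancel₀ (Nat.cast_ne_zero.mpr hn.ne')
        (by rw [h6.symm.trans csum, mul_one])
    intro i j
    by_cases h : i = j
    · subst h; rw [c0 i, c1, if_pos rfl]
    · rw [if_neg h]
      have h1 : E i j = E i j * E j j := by simp [hE]
      have h2 : E j j * E i j = 0 := by
        simp [hE, single_mul_single_of_ne, Ne.symm h]
      rw [h1, _root_.map_mul, trace_mul_comm, ← _root_.map_mul, h2, map_zero, trace_zero]
  conv_lhs => rw [matrix_eq_sum_single M]
  rw [map_sum, trace_sum]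
  have h3 : ∀ i : Fin n, (ψ (∑ j, Matrix.single i j (M i j))).trace = M i i := by
    intro i
    rw [map_sum, trace_sum]
    have h4 : ∀ j, (ψ (Matrix.single i j (M i j))).trace = if i = j then M i j else 0 := by
      intro j
      have h5 : Matrix.single i j (M i j) = M i j • E i j := by
        simp [hE, smul_single]
      rw [h5, _root_.map_smul, trace_smul, key i j, smul_eq_mul]
      by_cases h : i = j <;> simp [h]
    rw [Finset.sum_congr rfl (fun j _ => h4 j)]; simp
  rw [Finset.sum_congr rfl (fun i _ => h3 i)]
  rfl

theorem stmt_9 (n : ℕ)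
    (φ : Matrix (Fin n) (Fin n) ℝ → Matrix (Fin n) (Fin n) ℝ)
    (h2loc : ∀ A B : Matrix (Fin n) (Fin n) ℝ,
      ∃ ψ : Matrix (Fin n) (Fin n) ℝ ≃ₐ[ℝ] Matrix (Fin n) (Fin n) ℝ,
        φ A = ψ A ∧ φ B = ψ B) :
    ∃ ψ : Matrix (Fin n) (Fin n) ℝ ≃ₐ[ℝ] Matrix (Fin n) (Fin n) ℝ,
      ∀ A, φ A = ψ A := by
  rcases Nat.eq_zero_or_pos n with hn | hn
  · subst hn
    exact ⟨AlgEquiv.refl, fun A => Subsingleton.elim _ _⟩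
  set E : Fin n → Fin n → Matrix (Fin n) (Fin n) ℝ := fun i j => Matrix.single i j 1 with hE
  set v : Fin n → Fin n → Matrix (Fin n) (Fin n) ℝ := fun i j => φ (E i j) with hv
  set V : Fin n × Fin n → Matrix (Fin n) (Fin n) ℝ := fun p => v p.1 p.2 with hV
  have pairing : ∀ A B : Matrix (Fin n) (Fin n) ℝ,
      (φ A * φ B).trace = (A * B).trace := by
    intro A B
    obtain ⟨ψ, hA, hB⟩ := h2loc A B
    rw [hA, hB, ← _root_.map_mul, trace_algEquiv hn]
  have hsq : ∀ X : Matrix (Fin n) (Fin n) ℝ, φ X * φ X = φ (X * X) := by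
    intro X
    obtain ⟨ψ, h1, h2⟩ := h2loc X (X * X)
    rw [h1, h2, _root_.map_mul]
  have hz0 : ∀ X Y : Matrix (Fin n) (Fin n) ℝ, X * Y = 0 → φ X * φ Y = 0 := by
    intro X Y h
    obtain ⟨ψ, h1, h2⟩ := h2loc X Y
    rw [h1, h2, ← _root_.map_mul, h, map_zero]
  have hone : φ 1 = 1 := by
    obtain ⟨ψ, h1, -⟩ := h2loc 1 1
    rw [h1, _root_.map_one]
  have pairV : ∀ i j k l : Fin n, (v i j * v k l).trace = if j = k ∧ i = l then 1 else 0 := by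
    intro i j k l
    rw [hv]
    simp only []
    rw [pairing, hE]
    exact trace_sbm_mul_sbm i j k l
  have sumtr : ∀ (c : Fin n × Fin n → ℝ) (l k : Fin n),
      ((∑ p : Fin n × Fin n, c p • V p) * v l k).trace = c (k, l) := by
    intro c l k
    rw [Finset.sum_mul]
    simp_rw [smul_mul_assoc]
    rw [trace_sum]
    have h7 : ∀ p : Fin n × Fin n,
        (c p • (V p * v l k)).trace = if p = (k, l) then c p else 0 := by
      intro p
      rw [trace_smul, hV]
      simp only []
      rw [pairV p.1 p.2 l k, smul_eq_mul]
      by_cases h : p = (k, l)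
      · subst h; simp
      · rw [if_neg h, if_neg, mul_zero]
        rintro ⟨h1, h2⟩
        exact h (Prod.ext h2 h1)
    rw [Finset.sum_congr rfl (fun p _ => h7 p), Finset.sum_ite_eq' Finset.univ (k, l) c]
    simp
  have linind : LinearIndependent ℝ V := by
    rw [Fintype.linearIndependent_iff]
    intro g hg p
    have h10 := sumtr g p.2 p.1
    rw [hg, zero_mul, trace_zero] at h10
    exact h10.symm
  have card_eq : Fintype.card (Fin n × Fin n)
      = Module.finrank ℝ (Matrix (Fin n) (Fin n) ℝ) := by
    rw [Fintype.card_prod, Fintype.card_fin, Module.finrank_matrix]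
    simp
  have : Nonempty (Fin n × Fin n) := ⟨(⟨0, hn⟩, ⟨0, hn⟩)⟩
  set b := basisOfLinearIndependentOfCardEqFinrank linind card_eq with hb
  have hbcoe : ⇑b = V := coe_basisOfLinearIndependentOfCardEqFinrank linind card_eq
  have hcoef : ∀ (A : Matrix (Fin n) (Fin n) ℝ) (k l : Fin n),
      (φ A * v l k).trace = A k l := by
    intro A k l
    rw [hv]
    simp only []
    rw [pairing, hE]
    exact trace_mul_sbm A l k
  have hrep : ∀ A : Matrix (Fin n) (Fin n) ℝ,
      φ A = ∑ p : Fin n × Fin n, A p.1 p.2 • V p := by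
    intro A
    have h8 : φ A = ∑ p : Fin n × Fin n, b.repr (φ A) p • V p := by
      conv_lhs => rw [← Module.Basis.sum_repr b (φ A)]
      simp_rw [hbcoe]
    have h9 : ∀ p : Fin n × Fin n, b.repr (φ A) p = A p.1 p.2 := by
      intro p
      have h11 := sumtr (fun q => b.repr (φ A) q) p.2 p.1
      rw [← h8, hcoef] at h11
      exact h11.symm
    rw [h8, Finset.sum_congr rfl (fun p _ => by rw [h9 p])]
  have hadd : ∀ A B : Matrix (Fin n) (Fin n) ℝ, φ (A + B) = φ A + φ B := by
    intro A B
    rw [hrep (A + B), hrep A, hrep B, ← Finset.sum_add_distrib]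
    exact Finset.sum_congr rfl fun p _ => by rw [Matrix.add_apply, add_smul]
  have hsmul : ∀ (c : ℝ) (A : Matrix (Fin n) (Fin n) ℝ), φ (c • A) = c • φ A := by
    intro c A
    rw [hrep (c • A), hrep A, Finset.smul_sum]
    exact Finset.sum_congr rfl fun p _ => by rw [Matrix.smul_apply, smul_smul, smul_eq_mul]
  -- matrix unit products
  have hEmul : ∀ i j l : Fin n, E i j * E j l = E i l := by
    intro i j l
    rw [hE]
    simp only []
    rw [single_mul_single_same, one_mul]
  have hEzero : ∀ i j k l : Fin n, j ≠ k → E i j * E k l = 0 := by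
    intro i j k l h
    rw [hE]
    simp only []
    exact single_mul_single_of_ne _ _ _ _ h _
  have hzE : ∀ i j k l : Fin n, j ≠ k → v i j * v k l = 0 := by
    intro i j k l h
    show φ (E i j) * φ (E k l) = 0
    exact hz0 _ _ (hEzero i j k l h)
  have hvE : ∀ i j : Fin n, φ (E i j) = v i j := fun i j => rfl
  have hvii : ∀ i : Fin n, v i i * v i i = v i i := by
    intro i
    show φ (E i i) * φ (E i i) = φ (E i i)
    rw [hsq, hEmul]
  have caseB : ∀ i l : Fin n, i ≠ l → v i i * v i l = v i l := by
    intro i l h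
    have hA : (E i i + E i l) * (E i i + E i l) = E i i + E i l := by
      rw [add_mul, mul_add, mul_add, hEmul i i i, hEmul i i l,
        hEzero i l i i (Ne.symm h), hEzero i l i l (Ne.symm h)]
      abel
    have h1 := hsq (E i i + E i l)
    rw [hA, hadd, hvE, hvE] at h1
    rw [add_mul, mul_add, mul_add, hvii, hzE i l i i (Ne.symm h),
      hzE i l i l (Ne.symm h)] at h1
    rw [add_zero, add_zero] at h1
    exact add_left_cancel h1
  have caseC : ∀ i j : Fin n, i ≠ j → v i j * v j j = v i j := by
    intro i j h
    have hA : (E i j + E j j) * (E i j + E j j) = E i j + E j j := by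
      rw [add_mul, mul_add, mul_add, hEzero i j i j (Ne.symm h), hEmul i j j,
        hEzero j j i j (Ne.symm h), hEmul j j j]
      abel
    have h1 := hsq (E i j + E j j)
    rw [hA, hadd, hvE, hvE] at h1
    rw [add_mul, mul_add, mul_add, hzE i j i j (Ne.symm h),
      hzE j j i j (Ne.symm h), hvii] at h1
    have h2 : v i j * v j j + v j j = v i j + v j j := by
      rw [← h1]; abel
    exact add_right_cancel h2
  have caseD : ∀ i j : Fin n, i ≠ j → v i j * v j i = v i i := by
    intro i j h
    have hA : (E i j + E j i) * (E i j + E j i) = E i i + E j j := by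
      rw [add_mul, mul_add, mul_add, hEzero i j i j (Ne.symm h), hEmul i j i,
        hEmul j i j, hEzero j i j i h]
      abel
    have h1 := hsq (E i j + E j i)
    rw [hA, hadd, hadd, hvE, hvE, hvE, hvE] at h1
    rw [add_mul, mul_add, mul_add, hzE i j i j (Ne.symm h), hzE j i j i h] at h1
    have hPQ : v i j * v j i + v j i * v i j = v i i + v j j := by
      rw [← h1]; abel
    -- sandwich with v i i
    have e1 : v i i * ((v i j * v j i + v j i * v i j) * v i i)
        = v i i * ((v i i + v j j) * v i i) := by rw [hPQ]
    have hP1 : v i j * v j i * v i i = v i j * v j i := by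
      rw [mul_assoc, caseC j i (Ne.symm h)]
    have hQ1 : v j i * v i j * v i i = 0 := by
      rw [mul_assoc, hzE i j i i (Ne.symm h), mul_zero]
    have hL : v i i * ((v i j * v j i + v j i * v i j) * v i i) = v i j * v j i := by
      rw [add_mul, hP1, hQ1, add_zero, ← mul_assoc, caseB i j h]
    have hR : v i i * ((v i i + v j j) * v i i) = v i i := by
      rw [add_mul, hvii, hzE j j i i (Ne.symm h), add_zero, hvii]
    rw [hL, hR] at e1
    exact e1
  have caseE : ∀ i j l : Fin n, i ≠ j → j ≠ l → i ≠ l → v i j * v j l = v i l := by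
    intro i j l hij hjl hil
    have hA : (E i j + E j l) * (E i j + E j l) = E i l := by
      rw [add_mul, mul_add, mul_add, hEzero i j i j (Ne.symm hij), hEmul i j l,
        hEzero j l i j (Ne.symm hil), hEzero j l j l (Ne.symm hjl)]
      abel
    have h1 := hsq (E i j + E j l)
    rw [hA, hadd, hvE, hvE, hvE] at h1
    rw [add_mul, mul_add, mul_add, hzE i j i j (Ne.symm hij),
      hzE j l i j (Ne.symm hil), hzE j l j l (Ne.symm hjl)] at h1
    have h2 : v i j * v j l = v i l := by
      rw [← h1]; abel
    exact h2
  have hu : ∀ i j k l : Fin n, v i j * v k l = if j = k then v i l else 0 := by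
    intro i j k l
    by_cases hjk : j = k
    · subst hjk
      rw [if_pos rfl]
      by_cases hij : i = j
      · subst hij
        by_cases hil : i = l
        · subst hil; exact hvii i
        · exact caseB i l hil
      · by_cases hjl : j = l
        · subst hjl; exact caseC i j hij
        · by_cases hil : i = l
          · subst hil; exact caseD i j hij
          · exact caseE i j l hij hjl hil
    · rw [if_neg hjk]; exact hzE i j k l hjk
  have hmul : ∀ A B : Matrix (Fin n) (Fin n) ℝ, φ (A * B) = φ A * φ B := by
    intro A B
    rw [hrep (A * B), hrep A, hrep B, Finset.sum_mul_sum]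
    have step : ∀ p q : Fin n × Fin n,
        (A p.1 p.2 • V p) * (B q.1 q.2 • V q)
          = if p.2 = q.1 then (A p.1 p.2 * B q.1 q.2) • V (p.1, q.2) else 0 := by
      intro p q
      rw [smul_mul_smul_comm]
      have : V p * V q = if p.2 = q.1 then V (p.1, q.2) else 0 := hu p.1 p.2 q.1 q.2
      rw [this]
      by_cases h : p.2 = q.1 <;> simp [h]
    have rhs : (∑ p : Fin n × Fin n, ∑ q : Fin n × Fin n,
        (A p.1 p.2 • V p) * (B q.1 q.2 • V q))
          = ∑ p : Fin n × Fin n, ∑ q2 : Fin n, (A p.1 p.2 * B p.2 q2) • V (p.1, q2) := by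
      refine Finset.sum_congr rfl fun p _ => ?_
      rw [Finset.sum_congr rfl fun q _ => step p q]
      rw [Fintype.sum_prod_type]
      rw [Finset.sum_eq_single p.2]
      · exact Finset.sum_congr rfl fun q2 _ => if_pos rfl
      · intro q1 _ hq1
        refine Finset.sum_eq_zero fun q2 _ => if_neg fun hc => hq1 hc.symm
      · simp
    rw [rhs]
    have lhs : (∑ p : Fin n × Fin n, (A * B) p.1 p.2 • V p)
        = ∑ p : Fin n × Fin n, ∑ j : Fin n, (A p.1 j * B j p.2) • V p := by
      refine Finset.sum_congr rfl fun p _ => ?_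
      rw [Matrix.mul_apply, Finset.sum_smul]
    rw [lhs, Fintype.sum_prod_type, Fintype.sum_prod_type]
    refine Finset.sum_congr rfl fun i _ => ?_
    exact Finset.sum_comm
  -- build the algebra equivalence
  let T : Matrix (Fin n) (Fin n) ℝ →ₗ[ℝ] Matrix (Fin n) (Fin n) ℝ :=
    { toFun := φ, map_add' := hadd, map_smul' := hsmul }
  let Ta : Matrix (Fin n) (Fin n) ℝ →ₐ[ℝ] Matrix (Fin n) (Fin n) ℝ :=
    AlgHom.ofLinearMap T hone hmul
  have hinj : Function.Injective T := by
    intro X Y hXY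
    have hXY' : φ X = φ Y := hXY
    ext k l
    have h1 := hcoef X k l
    have h2 := hcoef Y k l
    rw [hXY', h2] at h1
    exact h1.symm
  have hsurj : Function.Surjective T := by
    rwa [← LinearMap.injective_iff_surjective]
  exact ⟨AlgEquiv.ofBijective Ta ⟨hinj, hsurj⟩, fun A => rfl⟩
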